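/- Let n ≥ 1 and let J_1, J_2 be disjoint subsets of {1,…,n}. Let i_1,…,i_k and i'_1,…,i'_{k'} be sequences in {1,…,n} each with set of values exactly J_1, let j_1,…,j_l and j'_1,…,j'_{l'} be sequences each with set of values exactly J_2, and let a_t, a'_t, b_s, b'_s be positive real numbers. Then the (n+1)×(n+1) complex matrices [∏_{t=1}^{k}(I + a_t E_{i_t,i_t+1})]·[∏_{s=1}^{l}(I + b_s E_{j_s+1,j_s})] and [∏_{t=1}^{k'}(I + a'_t E_{i'_t,i'_t+1})]·[∏_{s=1}^{l'}(I + b'_s E_{j'_s+1,j'_s})] are similar. -/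

import Mathlib

open Matrix BigOperators

noncomputable def Ecplx (n a b : ℕ) : Matrix (Fin (n + 1)) (Fin (n + 1)) ℂ :=
  Matrix.of fun p q => if (p : ℕ) + 1 = a ∧ (q : ℕ) + 1 = b then 1 else 0

namespace Stmt7
variable {n : ℕ}

abbrev Mat (n : ℕ) := Matrix (Fin (n+1)) (Fin (n+1)) ℂ

/-- ℕ-indexed entry, 0 out of range. -/
noncomputable def ent (A : Mat n) (p q : ℕ) : ℂ :=
  if h : p < n+1 ∧ q < n+1 then A ⟨p, h.1⟩ ⟨q, h.2⟩ else 0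

lemma ent_coe (A : Mat n) (p q : Fin (n+1)) : ent A p q = A p q := by
  simp [ent, p.isLt, q.isLt]

lemma ent_apply (A : Mat n) {p q : ℕ} (hp : p < n+1) (hq : q < n+1) :
    ent A p q = A ⟨p, hp⟩ ⟨q, hq⟩ := by simp [ent, hp, hq]

lemma ent_out (A : Mat n) {p q : ℕ} (h : ¬(p < n+1 ∧ q < n+1)) : ent A p q = 0 := by
  unfold ent; exact dif_neg h

lemma ext_ent {A B : Mat n} (h : ∀ p q : ℕ, ent A p q = ent B p q) : A = B := by
  ext p q
  have := h p q
  rwa [ent_coe, ent_coe] at this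

lemma ent_add (A B : Mat n) (p q : ℕ) : ent (A + B) p q = ent A p q + ent B p q := by
  by_cases h : p < n+1 ∧ q < n+1
  · simp [ent, h]
  · rw [ent_out _ h, ent_out _ h, ent_out _ h, add_zero]

lemma ent_sub (A B : Mat n) (p q : ℕ) : ent (A - B) p q = ent A p q - ent B p q := by
  by_cases h : p < n+1 ∧ q < n+1
  · simp [ent, h]
  · rw [ent_out _ h, ent_out _ h, ent_out _ h, sub_zero]

lemma ent_neg (A : Mat n) (p q : ℕ) : ent (-A) p q = - ent A p q := by
  by_cases h : p < n+1 ∧ q < n+1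
  · simp [ent, h]
  · rw [ent_out _ h, ent_out _ h, neg_zero]

lemma ent_smul (c : ℂ) (A : Mat n) (p q : ℕ) : ent (c • A) p q = c * ent A p q := by
  by_cases h : p < n+1 ∧ q < n+1
  · simp [ent, h]
  · simp [ent, h]

lemma ent_one (p q : ℕ) : ent (1 : Mat n) p q = if p = q ∧ p < n+1 then 1 else 0 := by
  by_cases h : p < n+1 ∧ q < n+1
  · rw [ent_apply _ h.1 h.2, Matrix.one_apply]
    by_cases hpq : p = q <;> simp [hpq, Fin.ext_iff, h.1, h.2]
  · rw [ent_out _ h]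
    push_neg at h
    by_cases hp : p < n+1
    · have hq := h hp
      have : ¬ (p = q ∧ p < n+1) := by rintro ⟨rfl, _⟩; omega
      rw [if_neg this]
    · simp [hp]

lemma ent_zero (p q : ℕ) : ent (0 : Mat n) p q = 0 := by
  by_cases h : p < n+1 ∧ q < n+1 <;> simp [ent, h]

lemma ent_mul (A B : Mat n) (p q : ℕ) :
    ent (A * B) p q = ∑ r ∈ Finset.range (n+1), ent A p r * ent B r q := by
  by_cases h : p < n+1 ∧ q < n+1
  · rw [ent_apply _ h.1 h.2, Matrix.mul_apply]
    rw [← Fin.sum_univ_eq_sum_range (fun r => ent A p r * ent B r q)]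
    apply Finset.sum_congr rfl
    intro r _
    rw [ent_apply _ h.1 r.isLt, ent_apply _ r.isLt h.2]
  · rw [ent_out _ h]
    push_neg at h
    apply (Finset.sum_eq_zero _).symm
    intro r hr
    by_cases hp : p < n+1
    · rw [ent_out B (by push_neg; intro _; exact h hp), mul_zero]
    · rw [ent_out A (by tauto), zero_mul]

lemma ent_transpose (A : Mat n) (p q : ℕ) : ent Aᵀ p q = ent A q p := by
  by_cases h : p < n+1 ∧ q < n+1
  · rw [ent_apply _ h.1 h.2, ent_apply _ h.2 h.1]; rfl
  · rw [ent_out _ h, ent_out _ (by tauto)]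

/-- strictly-upper, interval support in `J` (1-based labels). -/
def UpS (J : Finset ℕ) (A : Mat n) : Prop :=
  ∀ p q : ℕ, ent A p q ≠ 0 → p < q ∧ ∀ r, p ≤ r → r < q → r + 1 ∈ J

def Deg (d : ℕ) (A : Mat n) : Prop := ∀ p q : ℕ, ent A p q ≠ 0 → p + d ≤ q

namespace UpS
variable {J : Finset ℕ} {A B : Mat n}

lemma zero : UpS J (0 : Mat n) := fun p q h => absurd (ent_zero p q) h

lemma add (hA : UpS J A) (hB : UpS J B) : UpS J (A + B) := by
  intro p q h
  rw [ent_add] at h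
  rcases (by by_contra hc; push_neg at hc; simp [hc.1, hc.2] at h :
      ent A p q ≠ 0 ∨ ent B p q ≠ 0) with h' | h'
  · exact hA p q h'
  · exact hB p q h'

lemma sub (hA : UpS J A) (hB : UpS J B) : UpS J (A - B) := by
  intro p q h
  rw [ent_sub] at h
  rcases (by by_contra hc; push_neg at hc; simp [hc.1, hc.2] at h :
      ent A p q ≠ 0 ∨ ent B p q ≠ 0) with h' | h'
  · exact hA p q h'
  · exact hB p q h'

lemma neg (hA : UpS J A) : UpS J (-A) := by
  intro p q h; rw [ent_neg] at h; exact hA p q (by simpa using h)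

lemma smul (c : ℂ) (hA : UpS J A) : UpS J (c • A) := by
  intro p q h; rw [ent_smul] at h
  exact hA p q (fun h0 => h (by simp [h0]))

lemma mul (hA : UpS J A) (hB : UpS J B) : UpS J (A * B) := by
  intro p q h
  rw [ent_mul] at h
  obtain ⟨r, -, hr⟩ := Finset.exists_ne_zero_of_sum_ne_zero h
  have h1 := hA p r (fun h0 => hr (by simp [h0]))
  have h2 := hB r q (fun h0 => hr (by simp [h0]))
  refine ⟨h1.1.trans h2.1, fun u hu1 hu2 => ?_⟩
  rcases lt_or_ge u r with hur | hur
  · exact h1.2 u hu1 hur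
  · exact h2.2 u hur hu2

lemma sum {ι : Type*} (s : Finset ι) (f : ι → Mat n) (hf : ∀ x ∈ s, UpS J (f x)) :
    UpS J (∑ x ∈ s, f x) := by
  classical
  induction s using Finset.induction with
  | empty => simpa using zero
  | insert _ _ hx ih =>
    rw [Finset.sum_insert hx]
    exact add (hf _ (Finset.mem_insert_self _ _))
      (ih fun x hxs => hf x (Finset.mem_insert_of_mem hxs))

lemma pow (hA : UpS J A) (k : ℕ) : UpS J (A ^ (k+1)) := by
  induction k with
  | zero => simpa using hA
  | succ k ih => rw [pow_succ]; exact ih.mul hA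

lemma deg_one (hA : UpS J A) : Deg 1 A := fun p q h => (hA p q h).1

end UpS

namespace Deg
variable {d e : ℕ} {A B : Mat n}

lemma mono (hA : Deg d A) (h : e ≤ d) : Deg e A :=
  fun p q h0 => le_trans (by omega) (hA p q h0)

lemma add (hA : Deg d A) (hB : Deg d B) : Deg d (A + B) := by
  intro p q h
  rw [ent_add] at h
  rcases (by by_contra hc; push_neg at hc; simp [hc.1, hc.2] at h :
      ent A p q ≠ 0 ∨ ent B p q ≠ 0) with h' | h'
  · exact hA p q h'
  · exact hB p q h'

lemma mul (hA : Deg d A) (hB : Deg e B) : Deg (d+e) (A * B) := by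
  intro p q h
  rw [ent_mul] at h
  obtain ⟨r, -, hr⟩ := Finset.exists_ne_zero_of_sum_ne_zero h
  have h1 := hA p r (fun h0 => hr (by simp [h0]))
  have h2 := hB r q (fun h0 => hr (by simp [h0]))
  omega

lemma sum {ι : Type*} (s : Finset ι) (f : ι → Mat n) (hf : ∀ x ∈ s, Deg d (f x)) :
    Deg d (∑ x ∈ s, f x) := by
  classical
  induction s using Finset.induction with
  | empty => intro p q h; rw [Finset.sum_empty] at h; exact absurd (ent_zero p q) h
  | insert _ _ hx ih =>
    rw [Finset.sum_insert hx]
    exact add (hf _ (Finset.mem_insert_self _ _))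
      (ih fun x hxs => hf x (Finset.mem_insert_of_mem hxs))

lemma neg (hA : Deg d A) : Deg d (-A) := by
  intro p q h; rw [ent_neg] at h; exact hA p q (by simpa using h)

lemma pow_succ (hA : Deg d A) (k : ℕ) : Deg d (A ^ (k+1)) := by
  induction k with
  | zero => simpa using hA
  | succ k ih => rw [_root_.pow_succ]; exact (ih.mul hA).mono (by omega)

lemma eq_zero (hA : Deg (n+1) A) : A = 0 := by
  apply ext_ent
  intro p q
  rw [ent_zero]
  by_contra h
  have := hA p q h
  have : q < n + 1 := by
    by_contra hq
    exact h (by unfold ent; rw [dif_neg]; tauto)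
  omega

end Deg

lemma Deg.pow_full {X : Mat n} (hX : Deg 1 X) (k : ℕ) : Deg (k+1) (X^(k+1)) := by
  induction k with
  | zero => simpa using hX
  | succ m ih => rw [_root_.pow_succ]; exact ih.mul hX

lemma pow_zero_of_deg_one {X : Mat n} (hX : Deg 1 X) : X ^ (n+1) = 0 :=
  Deg.eq_zero (hX.pow_full n)

/-- tail of the geometric series inverse of `1 + X`. -/
noncomputable def ginv (X : Mat n) : Mat n := ∑ i ∈ Finset.range (n+1), (-X)^(i+1)

lemma one_add_ginv (X : Mat n) : 1 + ginv X = ∑ i ∈ Finset.range (n+2), (-X)^i := by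
  rw [Finset.sum_range_succ' (fun i => (-X)^i) (n+1)]
  simp [ginv, add_comm]

lemma hz_aux {X : Mat n} (hX : Deg 1 X) : (-X)^(n+2) = 0 := by
  have h0 : X^(n+2) = 0 := by rw [_root_.pow_succ, pow_zero_of_deg_one hX, zero_mul]
  rw [neg_pow, h0, mul_zero]

lemma mul_ginv {X : Mat n} (hX : Deg 1 X) : (1 + X) * (1 + ginv X) = 1 := by
  rw [one_add_ginv]
  have h := mul_geom_sum (-X) (n+2)
  rw [hz_aux hX] at h
  have h2 : (1 + X) = -(-X - 1) := by rw [neg_sub, sub_neg_eq_add]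
  rw [h2, neg_mul, h]
  simp

lemma ginv_mul {X : Mat n} (hX : Deg 1 X) : (1 + ginv X) * (1 + X) = 1 := by
  rw [one_add_ginv]
  have h := geom_sum_mul (-X) (n+2)
  rw [hz_aux hX] at h
  have h2 : (1 + X) = -(-X - 1) := by rw [neg_sub, sub_neg_eq_add]
  rw [h2, mul_neg, h]
  simp

lemma UpS.ginv {J} {X : Mat n} (hX : UpS J X) : UpS J (ginv X) :=
  UpS.sum _ _ (fun i _ => ((hX.neg).pow i))

lemma deg_ginv {d : ℕ} {X : Mat n} (hX : Deg d X) : Deg d (ginv X) :=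
  Deg.sum _ _ (fun i _ => (hX.neg.pow_succ i))

lemma ginv_add_self (X : Mat n) : ginv X + X = ∑ i ∈ Finset.range n, (-X)^(i+2) := by
  unfold ginv
  rw [Finset.sum_range_succ' (fun i => (-X)^(i+1)) n]
  simp [add_assoc]

lemma deg_ginv_add_self {d : ℕ} {X : Mat n} (hX : Deg d X) : Deg (2*d) (ginv X + X) := by
  rw [ginv_add_self]
  refine Deg.sum _ _ (fun i _ => ?_)
  have : (-X)^(i+2) = (-X)^(i+1) * (-X) := by rw [← _root_.pow_succ]
  rw [this]
  exact ((hX.neg.pow_succ i).mul hX.neg).mono (by omega)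

/-- canonical upper unipotent nilpotent part for support `J`. -/
noncomputable def canU (J : Finset ℕ) : Mat n :=
  Matrix.of fun p q : Fin (n+1) => if (q:ℕ) = (p:ℕ)+1 ∧ (q:ℕ) ∈ J then 1 else 0

lemma ent_canU (J : Finset ℕ) (hJ : J ⊆ Finset.Icc 1 n) (p q : ℕ) :
    ent (canU J : Mat n) p q = if q = p+1 ∧ q ∈ J then 1 else 0 := by
  by_cases h : p < n+1 ∧ q < n+1
  · rw [ent_apply _ h.1 h.2]; rfl
  · rw [ent_out _ h]
    have hne : ¬(q = p+1 ∧ q ∈ J) := by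
      rintro ⟨h1, hq⟩
      subst h1
      have := Finset.mem_Icc.mp (hJ hq)
      push_neg at h
      omega
    simp [hne]

lemma UpS.canU (J : Finset ℕ) (hJ : J ⊆ Finset.Icc 1 n) : UpS J (canU J : Mat n) := by
  intro p q h
  rw [ent_canU J hJ] at h
  by_cases hc : q = p+1 ∧ q ∈ J
  · refine ⟨by omega, fun r h1 h2 => ?_⟩
    have : r = p := by omega
    subst this
    rw [← hc.1] at *
    exact hc.2
  · simp [hc] at h

lemma Deg.canU (J : Finset ℕ) (hJ : J ⊆ Finset.Icc 1 n) : Deg 1 (canU J : Mat n) :=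
  (UpS.canU J hJ).deg_one

/-- cross support vanishing: upper `J₁`-supported times (transpose of upper `J₂`) is zero. -/
lemma cross_zero {J₁ J₂ : Finset ℕ} (hdisj : Disjoint J₁ J₂)
    {X B : Mat n} (hX : UpS J₁ X) (hB : UpS J₂ Bᵀ) : X * B = 0 ∧ B * X = 0 := by
  constructor
  · apply ext_ent
    intro p q
    rw [ent_zero, ent_mul]
    apply Finset.sum_eq_zero
    intro c _
    by_cases h1 : ent X p c = 0
    · rw [h1, zero_mul]
    by_cases h2 : ent B c q = 0
    · rw [h2, mul_zero]
    exfalso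
    have hx := hX p c h1
    have hb := hB q c (by rwa [ent_transpose])
    have m1 : c ∈ J₁ := by
      have := hx.2 (c-1) (by omega) (by omega)
      have hc : c - 1 + 1 = c := by omega
      rwa [hc] at this
    have m2 : c ∈ J₂ := by
      have := hb.2 (c-1) (by omega) (by omega)
      have hc : c - 1 + 1 = c := by omega
      rwa [hc] at this
    exact (Finset.disjoint_left.mp hdisj m1) m2
  · apply ext_ent
    intro p q
    rw [ent_zero, ent_mul]
    apply Finset.sum_eq_zero
    intro c _
    by_cases h1 : ent B p c = 0
    · rw [h1, zero_mul]
    by_cases h2 : ent X c q = 0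
    · rw [h2, mul_zero]
    exfalso
    have hb := hB c p (by rwa [ent_transpose])
    have hx := hX c q h2
    have m1 : c + 1 ∈ J₂ := hb.2 c le_rfl hb.1
    have m2 : c + 1 ∈ J₁ := hx.2 c le_rfl hx.1
    exact (Finset.disjoint_left.mp hdisj m2) m1

/-- Solution `X` to `canU J * X - X * canU J = (degree-d part of Z)`. -/
noncomputable def solveX (J : Finset ℕ) (d : ℕ) (Z : Mat n) : Mat n :=
  Matrix.of fun p q : Fin (n+1) =>
    if (q:ℕ) = (p:ℕ) + (d-1) then
      ∑ r ∈ Finset.range p, (if ∀ u ∈ Finset.Icc r ((q:ℕ)-1), u+1 ∈ J then ent Z r (r+d) else 0)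
    else 0

lemma ent_solveX (J : Finset ℕ) (d : ℕ) (Z : Mat n) {p q : ℕ} (hp : p < n+1) (hq : q < n+1) :
    ent (solveX J d Z) p q =
      if q = p + (d-1) then
        ∑ r ∈ Finset.range p, (if ∀ u ∈ Finset.Icc r (q-1), u+1 ∈ J then ent Z r (r+d) else 0)
      else 0 := by
  rw [ent_apply _ hp hq]; rfl

section clean
variable (J : Finset ℕ) (hJ : J ⊆ Finset.Icc 1 n)

lemma solveX_UpS {d : ℕ} (hd : 2 ≤ d) {Z : Mat n} (hZ : UpS J Z) :
    UpS J (solveX J d Z) := by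
  intro p q h
  have hpq : p < n+1 ∧ q < n+1 := by
    by_contra hc
    exact h (ent_out _ hc)
  rw [ent_solveX J d Z hpq.1 hpq.2] at h
  by_cases he : q = p + (d-1)
  · subst he
    refine ⟨by omega, fun u h1 h2 => ?_⟩
    rw [if_pos rfl] at h
    obtain ⟨r, hr, hterm⟩ := Finset.exists_ne_zero_of_sum_ne_zero h
    rw [Finset.mem_range] at hr
    have hcond : ∀ v ∈ Finset.Icc r (p + (d-1) - 1), v+1 ∈ J := by
      by_contra hc
      rw [if_neg hc] at hterm
      exact hterm rfl
    exact hcond u (Finset.mem_Icc.mpr ⟨le_trans (by omega) h1, by omega⟩)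
  · rw [if_neg he] at h
    exact absurd rfl h

lemma solveX_Deg {d : ℕ} (hd : 2 ≤ d) (Z : Mat n) : Deg (d-1) (solveX J d Z) := by
  intro p q h
  have hpq : p < n+1 ∧ q < n+1 := by
    by_contra hc
    exact h (ent_out _ hc)
  rw [ent_solveX J d Z hpq.1 hpq.2] at h
  by_cases he : q = p + (d-1)
  · omega
  · rw [if_neg he] at h
    exact absurd rfl h

/-- the commutator identity. -/
lemma solveX_comm (hJ : J ⊆ Finset.Icc 1 n) {d : ℕ} (hd : 2 ≤ d) {Z : Mat n} (hZ : UpS J Z) (hZd : Deg d Z) :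
    canU J * solveX J d Z - solveX J d Z * canU J =
      Matrix.of (fun p q : Fin (n+1) => if (q:ℕ) = (p:ℕ) + d then Z p q else 0) := by
  set X := solveX J d Z with hX
  have ent_canU_mul : ∀ (A : Mat n) (p q : ℕ),
      ent (canU J * A) p q = if p+1 ∈ J then ent A (p+1) q else 0 := by
    intro A p q
    rw [ent_mul]
    by_cases hp : p+1 ∈ J
    · have hle := Finset.mem_Icc.mp (hJ hp)
      have hmem : p+1 ∈ Finset.range (n+1) := Finset.mem_range.mpr (by omega)
      rw [Finset.sum_eq_single_of_mem (p+1) hmem ?side, ent_canU J hJ, if_pos ⟨rfl, hp⟩,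
        one_mul, if_pos hp]
      case side =>
        intro r _ hr
        rw [ent_canU J hJ, if_neg (by tauto), zero_mul]
    · rw [if_neg hp]
      apply Finset.sum_eq_zero
      intro r _
      rw [ent_canU J hJ, if_neg (by rintro ⟨rfl, h⟩; exact hp h), zero_mul]
  have ent_mul_canU : ∀ (A : Mat n) (p q : ℕ),
      ent (A * canU J) p q = if q ∈ J then ent A p (q-1) else 0 := by
    intro A p q
    rw [ent_mul]
    by_cases hq : q ∈ J
    · have hle := Finset.mem_Icc.mp (hJ hq)
      have hmem : q-1 ∈ Finset.range (n+1) := Finset.mem_range.mpr (by omega)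
      rw [Finset.sum_eq_single_of_mem (q-1) hmem ?side2, ent_canU J hJ,
        if_pos ⟨by omega, hq⟩, mul_one, if_pos hq]
      case side2 =>
        intro r _ hr
        rw [ent_canU J hJ, if_neg (by rintro ⟨rfl, h⟩; omega), mul_zero]
    · rw [if_neg hq]
      apply Finset.sum_eq_zero
      intro r _
      rw [ent_canU J hJ, if_neg (by rintro ⟨rfl, h⟩; exact hq h), mul_zero]
  apply ext_ent
  intro p q
  have entZd : ent (Matrix.of (fun p q : Fin (n+1) => if (q:ℕ) = (p:ℕ) + d then Z p q else 0) : Mat n) p q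
      = if q = p + d then ent Z p q else 0 := by
    by_cases h : p < n+1 ∧ q < n+1
    · rw [ent_apply _ h.1 h.2, ent_apply Z h.1 h.2]; rfl
    · rw [ent_out _ h, ent_out Z h]
      simp
  rw [ent_sub, ent_canU_mul X p q, ent_mul_canU X p q, entZd]
  by_cases hqd : q = p + d
  · subst hqd
    by_cases hrange : p + d < n + 1
    · have hC1 : (if p+1 ∈ J then ent X (p+1) (p+d) else 0)
          = ∑ r ∈ Finset.range (p+1),
              (if ∀ u ∈ Finset.Icc r (p+d-1), u+1 ∈ J then ent Z r (r+d) else 0) := by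
        have hx : ent X (p+1) (p+d) =
            ∑ r ∈ Finset.range (p+1),
              (if ∀ u ∈ Finset.Icc r (p+d-1), u+1 ∈ J then ent Z r (r+d) else 0) := by
          rw [hX, ent_solveX J d Z (by omega) hrange, if_pos (by omega)]
        by_cases hp : p+1 ∈ J
        · rw [if_pos hp, hx]
        · rw [if_neg hp]
          symm
          apply Finset.sum_eq_zero
          intro r hr
          rw [Finset.mem_range] at hr
          rw [if_neg]
          intro hcond
          exact hp (hcond p (Finset.mem_Icc.mpr ⟨by omega, by omega⟩))
      have hC2 : (if p + d ∈ J then ent X p (p+d-1) else 0)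
          = ∑ r ∈ Finset.range p,
              (if ∀ u ∈ Finset.Icc r (p+d-1), u+1 ∈ J then ent Z r (r+d) else 0) := by
        have hx : ent X p (p+d-1) =
            ∑ r ∈ Finset.range p,
              (if ∀ u ∈ Finset.Icc r (p+d-1-1), u+1 ∈ J then ent Z r (r+d) else 0) := by
          rw [hX, ent_solveX J d Z (by omega) (by omega), if_pos (by omega)]
        by_cases hq : p + d ∈ J
        · rw [if_pos hq, hx]
          apply Finset.sum_congr rfl
          intro r hr
          rw [Finset.mem_range] at hr
          congr 1
          apply propext
          constructor
          · intro hcond u hu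
            rw [Finset.mem_Icc] at hu
            by_cases hu2 : u = p+d-1
            · subst hu2
              have : p+d-1+1 = p+d := by omega
              rw [this]
              exact hq
            · exact hcond u (Finset.mem_Icc.mpr ⟨hu.1, by omega⟩)
          · intro hcond u hu
            rw [Finset.mem_Icc] at hu
            exact hcond u (Finset.mem_Icc.mpr ⟨hu.1, by omega⟩)
        · rw [if_neg hq]
          symm
          apply Finset.sum_eq_zero
          intro r hr
          rw [Finset.mem_range] at hr
          rw [if_neg]
          intro hcond
          have : p+d-1+1 = p+d := by omega
          exact hq (by rw [← this]; exact hcond (p+d-1) (Finset.mem_Icc.mpr ⟨by omega, le_rfl⟩))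
      rw [if_pos rfl, hC1, hC2, Finset.sum_range_succ]
      have hfin : (if ∀ u ∈ Finset.Icc p (p+d-1), u+1 ∈ J then ent Z p (p+d) else 0)
          = ent Z p (p+d) := by
        by_cases hcond : ∀ u ∈ Finset.Icc p (p+d-1), u+1 ∈ J
        · rw [if_pos hcond]
        · rw [if_neg hcond]
          by_contra hne
          apply hcond
          intro u hu
          rw [Finset.mem_Icc] at hu
          exact (hZ p (p+d) (fun h0 => hne h0.symm)).2 u hu.1 (by omega)
      rw [add_sub_cancel_left, hfin]
    · -- out of range: everything vanishes
      rw [if_pos rfl]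
      have h1 : ent X (p+1) (p+d) = 0 := ent_out _ (by omega)
      have h2 : p + d ∉ J := fun h => by
        have := Finset.mem_Icc.mp (hJ h); omega
      have h3 : ent Z p (p+d) = 0 := ent_out _ (by omega)
      rw [h1, if_neg h2, h3]
      simp
  · rw [if_neg hqd]
    have h1 : (if p+1 ∈ J then ent X (p+1) q else 0) = 0 := by
      by_cases hp : p+1 ∈ J
      · rw [if_pos hp]
        by_cases hr : p+1 < n+1 ∧ q < n+1
        · rw [hX, ent_solveX J d Z hr.1 hr.2, if_neg (by omega)]
        · exact ent_out _ hr
      · rw [if_neg hp]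
    have h2 : (if q ∈ J then ent X p (q-1) else 0) = 0 := by
      by_cases hq : q ∈ J
      · have hle := Finset.mem_Icc.mp (hJ hq)
        rw [if_pos hq]
        by_cases hr : p < n+1 ∧ q-1 < n+1
        · rw [hX, ent_solveX J d Z hr.1 hr.2, if_neg (by omega)]
        · exact ent_out _ hr
      · rw [if_neg hq]
    rw [h1, h2, sub_zero]

end clean

lemma ent_Zd {d : ℕ} (Z : Mat n) (p q : ℕ) :
    ent (Matrix.of (fun p q : Fin (n+1) => if (q:ℕ) = (p:ℕ) + d then Z p q else 0) : Mat n) p q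
      = if q = p + d then ent Z p q else 0 := by
  by_cases h : p < n+1 ∧ q < n+1
  · rw [ent_apply _ h.1 h.2, ent_apply Z h.1 h.2]; rfl
  · rw [ent_out _ h, ent_out Z h]; simp

lemma UpS_Zd {J : Finset ℕ} {d : ℕ} {Z : Mat n} (hZ : UpS J Z) :
    UpS J (Matrix.of (fun p q : Fin (n+1) => if (q:ℕ) = (p:ℕ) + d then Z p q else 0) : Mat n) := by
  intro p q h
  rw [ent_Zd] at h
  by_cases hq : q = p + d
  · rw [if_pos hq] at h
    exact hZ p q h
  · rw [if_neg hq] at h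
    exact absurd rfl h

/-- Main cleaning lemma: conjugate `1 + canU J + Z` to `1 + canU J`. -/
lemma clean (J : Finset ℕ) (hJ : J ⊆ Finset.Icc 1 n) :
    ∀ m d (Z : Mat n), n + 2 ≤ d + m → 2 ≤ d → UpS J Z → Deg d Z →
    ∃ X : Mat n, UpS J X ∧
      (1 + X) * (1 + canU J + Z) = (1 + canU J) * (1 + X) := by
  intro m
  induction m with
  | zero =>
    intro d Z hm hd hZ hZd
    have : Z = 0 := Deg.eq_zero (hZd.mono (by omega))
    subst this
    exact ⟨0, UpS.zero, by simp⟩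
  | succ m ih =>
    intro d Z hm hd hZ hZd
    by_cases hbig : n + 1 ≤ d
    · have : Z = 0 := Deg.eq_zero (hZd.mono (by omega))
      subst this
      exact ⟨0, UpS.zero, by simp⟩
    set X := solveX J d Z with hXdef
    have hXU : UpS J X := solveX_UpS J hd hZ
    have hXD : Deg (d-1) X := solveX_Deg J hd Z
    have hXD1 : Deg 1 X := hXD.mono (by omega)
    set S := ginv X with hSdef
    have hSU : UpS J S := hXU.ginv
    have hSD : Deg (d-1) S := deg_ginv hXD
    have hinv1 : (1 + X) * (1 + S) = 1 := mul_ginv hXD1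
    have hinv2 : (1 + S) * (1 + X) = 1 := ginv_mul hXD1
    set A0 := (canU J : Mat n) with hA0def
    have hA0U : UpS J A0 := UpS.canU J hJ
    have hA0D : Deg 1 A0 := Deg.canU J hJ
    set W := (1 + X) * (1 + A0 + Z) * (1 + S) - 1 - A0 with hWdef
    -- expanded form of W
    set R := S + X with hRdef
    have hRD : Deg (2*(d-1)) R := by
      have := deg_ginv_add_self hXD
      rwa [← hSdef, ← hRdef] at this
    have hRU : UpS J R := hSU.add hXU
    set Zd := (Matrix.of (fun p q : Fin (n+1) => if (q:ℕ) = (p:ℕ) + d then Z p q else 0) : Mat n) with hZddef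
    have hcomm : A0 * X - X * A0 = Zd := solveX_comm J hJ hd hZ hZd
    have h0 : (1:Mat n) + (X + S + X*S) = (1+X)*(1+S) := by noncomm_ring
    rw [hinv1] at h0
    have h1 : X + S + X*S = 0 := by
      have := add_eq_left.mp h0
      exact this
    have hWexp : W = (Z - Zd) + (A0 * R + Z * S + X * Z + X * (A0 + Z) * S) := by
      rw [← hcomm]
      apply eq_of_sub_eq_zero
      have hdiff : W - ((Z - (A0 * X - X * A0)) + (A0 * R + Z * S + X * Z + X * (A0 + Z) * S))
          = X + S + X * S := by
        rw [hWdef, hRdef]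
        noncomm_ring
      rw [hdiff, h1]
    have hWU : UpS J W := by
      rw [hWexp]
      exact ((hZ.sub (UpS_Zd hZ)).add ((((hA0U.mul hRU).add (hZ.mul hSU)).add (hXU.mul hZ)).add ((hXU.mul (hA0U.add hZ)).mul hSU)))
    have hWD : Deg (d+1) W := by
      rw [hWexp]
      have h1 : Deg (d+1) (Z - Zd) := by
        intro p q h
        rw [ent_sub, ent_Zd] at h
        by_cases hq : q = p + d
        · rw [if_pos hq, sub_self] at h
          exact absurd rfl h
        · rw [if_neg hq, sub_zero] at h
          have := hZd p q h
          omega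
      have h2 : Deg (d+1) (A0 * R) :=
        (hA0D.mul (hRD.mono (show d ≤ 2*(d-1) by omega))).mono (by omega)
      have h3 : Deg (d+1) (Z * S) := (hZd.mul hSD).mono (by omega)
      have h4 : Deg (d+1) (X * Z) := (hXD.mul hZd).mono (by omega)
      have h5 : Deg (d+1) (X * (A0 + Z) * S) :=
        ((hXD.mul (hA0D.add (hZd.mono (by omega)))).mul hSD).mono (by omega)
      exact (h1.add (((h2.add h3).add h4).add h5)).mono (by omega)
    obtain ⟨X', hX'U, hX'eq⟩ := ih (d+1) W (by omega) (by omega) hWU hWD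
    refine ⟨X' + X + X' * X, (hX'U.add hXU).add (hX'U.mul hXU), ?_⟩
    have hprod : (1 : Mat n) + (X' + X + X' * X) = (1 + X') * (1 + X) := by noncomm_ring
    have hE1 : (1 + A0 + W) * (1 + X) = (1 + X) * (1 + A0 + Z) := by
      have : (1 + A0 + W) = (1 + X) * (1 + A0 + Z) * (1 + S) := by
        rw [hWdef]; abel
      rw [this, mul_assoc, hinv2, mul_one]
    rw [hprod]
    calc (1 + X') * (1 + X) * (1 + A0 + Z)
        = (1 + X') * ((1 + X) * (1 + A0 + Z)) := by rw [mul_assoc]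
      _ = (1 + X') * ((1 + A0 + W) * (1 + X)) := by rw [hE1]
      _ = ((1 + X') * (1 + A0 + W)) * (1 + X) := by rw [mul_assoc]
      _ = ((1 + A0) * (1 + X')) * (1 + X) := by rw [hX'eq]
      _ = (1 + A0) * ((1 + X') * (1 + X)) := by rw [mul_assoc]

lemma ent_Ecplx (a b p q : ℕ) :
    ent (Ecplx n a b) p q = if p + 1 = a ∧ q + 1 = b ∧ p < n+1 ∧ q < n+1 then 1 else 0 := by
  by_cases h : p < n+1 ∧ q < n+1
  · rw [ent_apply _ h.1 h.2]
    show (if p + 1 = a ∧ q + 1 = b then (1:ℂ) else 0) = _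
    by_cases hc : p + 1 = a ∧ q + 1 = b
    · rw [if_pos hc, if_pos ⟨hc.1, hc.2, h.1, h.2⟩]
    · rw [if_neg hc, if_neg (by tauto)]
  · rw [ent_out _ h, if_neg (by tauto)]

/-- elementary factor for letter `i` with coefficient `c`. -/
noncomputable def elem (c : ℝ) (i : ℕ) : Mat n := (c : ℂ) • Ecplx n i (i+1)

lemma UpS_elem {J : Finset ℕ} {i : ℕ} (hi : i ∈ J) (c : ℝ) : UpS J (elem c i : Mat n) := by
  intro p q h
  unfold elem at h
  rw [ent_smul, ent_Ecplx] at h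
  by_cases hc : p + 1 = i ∧ q + 1 = i + 1 ∧ p < n+1 ∧ q < n+1
  · obtain ⟨h1, h2, -, -⟩ := hc
    have hq : q = i := by omega
    have hp : p = i - 1 := by omega
    refine ⟨by omega, fun r hr1 hr2 => ?_⟩
    have hr : r + 1 = i := by omega
    rw [hr]
    exact hi
  · rw [if_neg hc, mul_zero] at h
    exact absurd rfl h

lemma ent_elem_superdiag {i : ℕ} (hi : 1 ≤ i) (hin : i ≤ n) (c : ℝ) (p : ℕ) :
    ent (elem c i : Mat n) p (p+1) = if i = p + 1 then (c:ℂ) else 0 := by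
  unfold elem
  rw [ent_smul, ent_Ecplx]
  by_cases hc : i = p + 1
  · subst hc
    rw [if_pos ⟨rfl, rfl, by omega, by omega⟩, mul_one, if_pos rfl]
  · rw [if_neg (by rintro ⟨h1, -⟩; exact hc h1.symm), mul_zero, if_neg hc]

/-- main product form lemma -/
lemma prodForm (J : Finset ℕ) (hJ : J ⊆ Finset.Icc 1 n) (L : List (ℝ × ℕ))
    (hL : ∀ x ∈ L, x.2 ∈ J) :
    ∃ A : Mat n, UpS J A ∧
      (L.map fun x => (1 : Mat n) + elem x.1 x.2).prod = 1 + A ∧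
      ∀ p : ℕ, ent A p (p+1) =
        (((L.filter (fun x => x.2 = p+1)).map Prod.fst).sum : ℝ) := by
  induction L with
  | nil =>
    refine ⟨0, UpS.zero, by simp, fun p => by simp [ent_zero]⟩
  | cons x L ih =>
    obtain ⟨A, hA, hprod, hsd⟩ := ih (fun y hy => hL y (List.mem_cons_of_mem x hy))
    have hx : x.2 ∈ J := hL x List.mem_cons_self
    have hxIcc := Finset.mem_Icc.mp (hJ hx)
    have hE : UpS J (elem x.1 x.2 : Mat n) := UpS_elem hx x.1
    refine ⟨elem x.1 x.2 + A + elem x.1 x.2 * A, (hE.add hA).add (hE.mul hA), ?_, ?_⟩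
    · rw [List.map_cons, List.prod_cons, hprod]
      noncomm_ring
    · intro p
      rw [ent_add, ent_add]
      have hEA : ent ((elem x.1 x.2 : Mat n) * A) p (p+1) = 0 := by
        by_contra h
        have := (hE.deg_one.mul hA.deg_one) p (p+1) h
        omega
      rw [hEA, add_zero, hsd p, ent_elem_superdiag hxIcc.1 hxIcc.2]
      by_cases hc : x.2 = p + 1
      · simp [List.filter_cons, hc]
      · simp [List.filter_cons, hc]

def Sim (M N : Mat n) : Prop := ∃ u : (Mat n)ˣ, (u : Mat n) * M * ((u⁻¹ : (Mat n)ˣ) : Mat n) = N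

lemma Sim.trans {M N P : Mat n} (h1 : Sim M N) (h2 : Sim N P) : Sim M P := by
  obtain ⟨u, hu⟩ := h1
  obtain ⟨v, hv⟩ := h2
  refine ⟨v * u, ?_⟩
  have h1 : ((v*u : (Mat n)ˣ) : Mat n) = (v : Mat n) * u := rfl
  have h2 : (((v*u)⁻¹ : (Mat n)ˣ) : Mat n) = ((u⁻¹ : (Mat n)ˣ) : Mat n) * ((v⁻¹ : (Mat n)ˣ) : Mat n) := by
    rw [_root_.mul_inv_rev]; rfl
  rw [h1, h2, ← hv, ← hu]
  noncomm_ring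

lemma Sim.symm {M N : Mat n} (h : Sim M N) : Sim N M := by
  obtain ⟨u, hu⟩ := h
  refine ⟨u⁻¹, ?_⟩
  rw [← hu, inv_inv]
  have h1 : ((u⁻¹ : (Mat n)ˣ) : Mat n) * (u : Mat n) = 1 := u.inv_mul
  have h2 : (u : Mat n) * ((u⁻¹ : (Mat n)ˣ) : Mat n) = 1 := u.mul_inv
  calc ((u⁻¹:(Mat n)ˣ) : Mat n) * ((u:Mat n) * M * ((u⁻¹:(Mat n)ˣ):Mat n)) * (u:Mat n)
      = (((u⁻¹:(Mat n)ˣ):Mat n) * (u:Mat n)) * M * (((u⁻¹:(Mat n)ˣ):Mat n) * (u:Mat n)) := by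
        noncomm_ring
    _ = M := by rw [h1]; noncomm_ring

/-- the diagonal scaling vector -/
noncomputable def dvec (J₁ J₂ : Finset ℕ) (α β : ℕ → ℂ) : ℕ → ℂ
  | 0 => 1
  | p+1 => if p+1 ∈ J₁ then dvec J₁ J₂ α β p * α p
      else if p+1 ∈ J₂ then dvec J₁ J₂ α β p * (β p)⁻¹
      else dvec J₁ J₂ α β p

lemma dvec_succ (J₁ J₂ : Finset ℕ) (α β : ℕ → ℂ) (p : ℕ) :
    dvec J₁ J₂ α β (p+1) = if p+1 ∈ J₁ then dvec J₁ J₂ α β p * α p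
      else if p+1 ∈ J₂ then dvec J₁ J₂ α β p * (β p)⁻¹
      else dvec J₁ J₂ α β p := rfl

lemma dvec_ne_zero (J₁ J₂ : Finset ℕ) (α β : ℕ → ℂ)
    (hα : ∀ p, p+1 ∈ J₁ → α p ≠ 0) (hβ : ∀ p, p+1 ∈ J₂ → β p ≠ 0) :
    ∀ p, dvec J₁ J₂ α β p ≠ 0 := by
  intro p
  induction p with
  | zero => simp [dvec]
  | succ p ih =>
    rw [dvec_succ]
    by_cases h1 : p+1 ∈ J₁
    · rw [if_pos h1]; exact mul_ne_zero ih (hα p h1)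
    · rw [if_neg h1]
      by_cases h2 : p+1 ∈ J₂
      · rw [if_pos h2]; exact mul_ne_zero ih (inv_ne_zero (hβ p h2))
      · rwa [if_neg h2]

/-- Main normalization: `1 + A + B` is similar to the canonical matrix. -/
lemma normalize {J₁ J₂ : Finset ℕ} (hJ₁ : J₁ ⊆ Finset.Icc 1 n) (hJ₂ : J₂ ⊆ Finset.Icc 1 n)
    (hdisj : Disjoint J₁ J₂) (A B : Mat n) (hA : UpS J₁ A) (hB : UpS J₂ Bᵀ)
    (hAsd : ∀ p, p+1 ∈ J₁ → ent A p (p+1) ≠ 0)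
    (hBsd : ∀ p, p+1 ∈ J₂ → ent B (p+1) p ≠ 0) :
    Sim (1 + A + B) (1 + canU J₁ + (canU J₂)ᵀ) := by
  classical
  set α : ℕ → ℂ := fun p => ent A p (p+1) with hαdef
  set β : ℕ → ℂ := fun p => ent B (p+1) p with hβdef
  set e : ℕ → ℂ := dvec J₁ J₂ α β with hedef
  have he : ∀ p, e p ≠ 0 := dvec_ne_zero J₁ J₂ α β hAsd hBsd
  set D : Mat n := Matrix.diagonal (fun p : Fin (n+1) => e p) with hDdef
  set D' : Mat n := Matrix.diagonal (fun p : Fin (n+1) => (e p)⁻¹) with hD'def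
  have hDD' : D * D' = 1 := by
    rw [hDdef, hD'def, Matrix.diagonal_mul_diagonal]
    convert Matrix.diagonal_one
    exact mul_inv_cancel₀ (he _)
  have hD'D : D' * D = 1 := by
    rw [hDdef, hD'def, Matrix.diagonal_mul_diagonal]
    convert Matrix.diagonal_one
    exact inv_mul_cancel₀ (he _)
  have entD : ∀ (M : Mat n) (p q : ℕ), ent (D * M * D') p q = e p * ent M p q * (e q)⁻¹ := by
    intro M p q
    by_cases h : p < n+1 ∧ q < n+1
    · rw [ent_apply _ h.1 h.2, ent_apply M h.1 h.2]
      rw [Matrix.mul_diagonal, Matrix.diagonal_mul]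
    · rw [ent_out _ h, ent_out M h, mul_zero, zero_mul]
  -- the diagonally rescaled matrices
  set A' : Mat n := D * A * D' with hA'def
  set B' : Mat n := D * B * D' with hB'def
  have hA'U : UpS J₁ A' := by
    intro p q h
    rw [entD] at h
    apply hA p q
    intro h0
    rw [h0] at h
    simp at h
  have hB'U : UpS J₂ B'ᵀ := by
    intro p q h
    rw [ent_transpose, entD] at h
    apply hB p q
    rw [ent_transpose]
    intro h0
    rw [h0] at h
    simp at h
  -- superdiagonal of A' is one on J₁
  have hA'sd : ∀ p, p+1 ∈ J₁ → ent A' p (p+1) = 1 := by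
    intro p hp
    rw [entD]
    have hstep : e (p+1) = e p * α p := by
      rw [hedef]
      rw [dvec_succ, if_pos hp]
    rw [show ent A p (p+1) = α p from rfl, ← hstep]
    exact mul_inv_cancel₀ (he _)
  have hB'sd : ∀ p, p+1 ∈ J₂ → ent B' (p+1) p = 1 := by
    intro p hp
    rw [entD]
    have hp1 : p+1 ∉ J₁ := fun h => (Finset.disjoint_left.mp hdisj h) hp
    have hstep : e (p+1) = e p * (β p)⁻¹ := by
      rw [hedef]
      rw [dvec_succ, if_neg hp1, if_pos hp]
    rw [show ent B (p+1) p = β p from rfl, hstep]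
    field_simp
    exact div_self (mul_ne_zero (he p) (hBsd p hp))
  -- Step 1: diagonal conjugation
  have sim1 : Sim (1 + A + B) (1 + A' + B') := by
    refine ⟨⟨D, D', hDD', hD'D⟩, ?_⟩
    show D * (1 + A + B) * D' = 1 + A' + B'
    rw [hA'def, hB'def]
    calc D * (1 + A + B) * D' = D*D' + D*A*D' + D*B*D' := by noncomm_ring
      _ = 1 + D*A*D' + D*B*D' := by rw [hDD']
  -- Step 2: clean the upper part
  set Z : Mat n := A' - canU J₁ with hZdef
  have hZU : UpS J₁ Z := hA'U.sub (UpS.canU J₁ hJ₁)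
  have hZD : Deg 2 Z := by
    intro p q h
    rw [hZdef, ent_sub, ent_canU J₁ hJ₁] at h
    by_cases hq : q = p+1
    · subst hq
      exfalso
      by_cases hj : p+1 ∈ J₁
      · rw [if_pos ⟨rfl, hj⟩, hA'sd p hj] at h
        simp at h
      · rw [if_neg (by tauto)] at h
        have h0 : ent A' p (p+1) = 0 := by
          by_contra h0
          exact hj ((hA'U p (p+1) h0).2 p le_rfl (by omega))
        rw [h0] at h
        simp at h
    · rw [if_neg (by tauto), sub_zero] at h
      have h2 := (hA'U p q h).1
      omega
  obtain ⟨X, hXU, hXeq⟩ := clean J₁ hJ₁ n 2 Z (by omega) (by omega) hZU hZD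
  have hXB : X * B' = 0 ∧ B' * X = 0 := cross_zero hdisj hXU hB'U
  have hgXB : (ginv X) * B' = 0 ∧ B' * ginv X = 0 := cross_zero hdisj hXU.ginv hB'U
  have sim2 : Sim (1 + A' + B') (1 + canU J₁ + B') := by
    refine ⟨⟨1 + X, 1 + ginv X, mul_ginv hXU.deg_one, ginv_mul hXU.deg_one⟩, ?_⟩
    show (1 + X) * (1 + A' + B') * (1 + ginv X) = 1 + canU J₁ + B'
    have hdecomp : (1 : Mat n) + A' + B' = (1 + canU J₁ + Z) + B' := by
      rw [hZdef]; abel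
    rw [hdecomp]
    have hsplit : (1 + X) * ((1 + canU J₁ + Z) + B') * (1 + ginv X)
        = (1 + X) * (1 + canU J₁ + Z) * (1 + ginv X) + (1 + X) * B' * (1 + ginv X) := by
      noncomm_ring
    rw [hsplit, hXeq]
    have h1 : (1 + canU J₁) * (1 + X) * (1 + ginv X) = 1 + canU J₁ := by
      rw [mul_assoc, mul_ginv hXU.deg_one, mul_one]
    have h2 : (1 + X) * B' * (1 + ginv X) = B' := by
      have e1 : (1 + X) * B' = B' := by rw [add_mul, one_mul, hXB.1, add_zero]
      rw [e1, mul_add, mul_one, hgXB.2, add_zero]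
    rw [h1, h2]
  -- Step 3: clean the lower part (via transpose)
  set Z₂ : Mat n := B'ᵀ - canU J₂ with hZ₂def
  have hZ₂U : UpS J₂ Z₂ := hB'U.sub (UpS.canU J₂ hJ₂)
  have hB'Tsd : ∀ p, p+1 ∈ J₂ → ent B'ᵀ p (p+1) = 1 := by
    intro p hp
    rw [ent_transpose]
    exact hB'sd p hp
  have hZ₂D : Deg 2 Z₂ := by
    intro p q h
    rw [hZ₂def, ent_sub, ent_canU J₂ hJ₂] at h
    by_cases hq : q = p+1
    · subst hq
      exfalso
      by_cases hj : p+1 ∈ J₂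
      · rw [if_pos ⟨rfl, hj⟩, hB'Tsd p hj] at h
        simp at h
      · rw [if_neg (by tauto)] at h
        have h0 : ent B'ᵀ p (p+1) = 0 := by
          by_contra h0
          exact hj ((hB'U p (p+1) h0).2 p le_rfl (by omega))
        rw [h0] at h
        simp at h
    · rw [if_neg (by tauto), sub_zero] at h
      have h2 := (hB'U p q h).1
      omega
  obtain ⟨Y, hYU, hYeq⟩ := clean J₂ hJ₂ n 2 Z₂ (by omega) (by omega) hZ₂U hZ₂D
  have hYD1 : Deg 1 Y := hYU.deg_one
  have hYT1 : (1 + Yᵀ) * (1 + (ginv Y)ᵀ) = 1 := by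
    have := ginv_mul hYD1
    have h := congrArg Matrix.transpose this
    simp only [Matrix.transpose_mul, Matrix.transpose_add, Matrix.transpose_one] at h
    exact h
  have hYT2 : (1 + (ginv Y)ᵀ) * (1 + Yᵀ) = 1 := by
    have := mul_ginv hYD1
    have h := congrArg Matrix.transpose this
    simp only [Matrix.transpose_mul, Matrix.transpose_add, Matrix.transpose_one] at h
    exact h
  have hYeqT : (1 + B') * (1 + Yᵀ) = (1 + Yᵀ) * (1 + (canU J₂)ᵀ) := by
    have hdec : (1 : Mat n) + canU J₂ + Z₂ = 1 + B'ᵀ := by rw [hZ₂def]; abel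
    rw [hdec] at hYeq
    have h := congrArg Matrix.transpose hYeq
    simp only [Matrix.transpose_mul, Matrix.transpose_add, Matrix.transpose_one,
      Matrix.transpose_transpose] at h
    exact h
  have hcY1 : canU J₁ * Yᵀ = 0 ∧ Yᵀ * canU J₁ = 0 := by
    apply cross_zero hdisj (UpS.canU J₁ hJ₁)
    rwa [Matrix.transpose_transpose]
  have hcY2 : canU J₁ * (ginv Y)ᵀ = 0 ∧ (ginv Y)ᵀ * canU J₁ = 0 := by
    apply cross_zero hdisj (UpS.canU J₁ hJ₁)
    rw [Matrix.transpose_transpose]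
    exact hYU.ginv
  have sim3 : Sim (1 + canU J₁ + B') (1 + canU J₁ + (canU J₂)ᵀ) := by
    refine ⟨⟨1 + (ginv Y)ᵀ, 1 + Yᵀ, hYT2, hYT1⟩, ?_⟩
    show (1 + (ginv Y)ᵀ) * (1 + canU J₁ + B') * (1 + Yᵀ) = 1 + canU J₁ + (canU J₂)ᵀ
    have hsplit : (1 + (ginv Y)ᵀ) * (1 + canU J₁ + B') * (1 + Yᵀ)
        = (1 + (ginv Y)ᵀ) * (1 + B') * (1 + Yᵀ)
          + (1 + (ginv Y)ᵀ) * canU J₁ * (1 + Yᵀ) := by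
      noncomm_ring
    rw [hsplit]
    have h1 : (1 + (ginv Y)ᵀ) * (1 + B') * (1 + Yᵀ) = 1 + (canU J₂)ᵀ := by
      rw [mul_assoc, hYeqT, ← mul_assoc, hYT2, one_mul]
    have h2 : (1 + (ginv Y)ᵀ) * canU J₁ * (1 + Yᵀ) = canU J₁ := by
      have e1 : (1 + (ginv Y)ᵀ) * canU J₁ = canU J₁ := by
        rw [add_mul, one_mul, hcY2.2, add_zero]
      rw [e1, mul_add, mul_one, hcY1.1, add_zero]
    rw [h1, h2]
    abel
  exact (sim1.trans sim2).trans sim3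

lemma transpose_Ecplx (a b : ℕ) : (Ecplx n a b)ᵀ = Ecplx n b a := by
  ext p q
  show Ecplx n a b q p = Ecplx n b a p q
  show (if (q:ℕ)+1 = a ∧ (p:ℕ)+1 = b then (1:ℂ) else 0) = (if (p:ℕ)+1 = b ∧ (q:ℕ)+1 = a then (1:ℂ) else 0)
  by_cases h : (q:ℕ)+1 = a ∧ (p:ℕ)+1 = b
  · rw [if_pos h, if_pos ⟨h.2, h.1⟩]
  · rw [if_neg h, if_neg (by tauto)]

lemma sum_filter_pos (L : List (ℝ × ℕ)) (hpos : ∀ x ∈ L, 0 < x.1) (m : ℕ)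
    (hne : ∃ x ∈ L, x.2 = m) :
    ((L.filter (fun x => x.2 = m)).map Prod.fst).sum ≠ 0 := by
  have h1 : ∀ y ∈ (L.filter (fun x => x.2 = m)).map Prod.fst, 0 < y := by
    intro y hy
    rw [List.mem_map] at hy
    obtain ⟨x, hx, rfl⟩ := hy
    exact hpos x (List.mem_of_mem_filter hx)
  have h2 : (L.filter (fun x => x.2 = m)).map Prod.fst ≠ [] := by
    obtain ⟨x, hx, hxm⟩ := hne
    have : x ∈ L.filter (fun x => x.2 = m) := List.mem_filter.mpr ⟨hx, by simp [hxm]⟩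
    intro hcon
    rw [List.map_eq_nil_iff] at hcon
    rw [hcon] at this
    exact List.not_mem_nil this
  exact (List.sum_pos _ h1 h2).ne'

lemma side (J₁ J₂ : Finset ℕ) (hJ₁ : J₁ ⊆ Finset.Icc 1 n) (hJ₂ : J₂ ⊆ Finset.Icc 1 n)
    (hdisj : Disjoint J₁ J₂) (k l : ℕ) (i : Fin k → ℕ) (j : Fin l → ℕ)
    (hi : ∀ t, i t ∈ J₁) (hisurj : ∀ m ∈ J₁, ∃ t, i t = m)
    (hj : ∀ s, j s ∈ J₂) (hjsurj : ∀ m ∈ J₂, ∃ s, j s = m)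
    (a : Fin k → ℝ) (b : Fin l → ℝ) (ha : ∀ t, 0 < a t) (hb : ∀ s, 0 < b s) :
    Sim (((List.ofFn fun t => (1 : Mat n) + (a t : ℂ) • Ecplx n (i t) (i t + 1)).prod) *
          ((List.ofFn fun s => (1 : Mat n) + (b s : ℂ) • Ecplx n (j s + 1) (j s)).prod))
        (1 + canU J₁ + (canU J₂)ᵀ) := by
  classical
  set L₁ : List (ℝ × ℕ) := List.ofFn (fun t => (a t, i t)) with hL₁def
  have hL₁ : ∀ x ∈ L₁, x.2 ∈ J₁ := by
    intro x hx
    rw [hL₁def, List.mem_ofFn] at hx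
    obtain ⟨t, rfl⟩ := hx
    exact hi t
  obtain ⟨A, hAU, hAprod, hAsd⟩ := prodForm J₁ hJ₁ L₁ hL₁
  have hU : (List.ofFn fun t => (1 : Mat n) + (a t : ℂ) • Ecplx n (i t) (i t + 1)).prod = 1 + A := by
    rw [← hAprod, hL₁def, List.map_ofFn]
    rfl
  set L₂ : List (ℝ × ℕ) := (List.ofFn (fun s => (b s, j s))).reverse with hL₂def
  have hL₂ : ∀ x ∈ L₂, x.2 ∈ J₂ := by
    intro x hx
    rw [hL₂def, List.mem_reverse, List.mem_ofFn] at hx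
    obtain ⟨s, rfl⟩ := hx
    exact hj s
  obtain ⟨K, hKU, hKprod, hKsd⟩ := prodForm J₂ hJ₂ L₂ hL₂
  have hLT : ((List.ofFn fun s => (1 : Mat n) + (b s : ℂ) • Ecplx n (j s + 1) (j s)).prod)ᵀ
      = 1 + K := by
    rw [Matrix.transpose_list_prod, ← hKprod, hL₂def, List.map_reverse, List.map_ofFn, List.map_ofFn]
    have hfun : (Matrix.transpose ∘ fun s => (1 : Mat n) + (b s : ℂ) • Ecplx n (j s + 1) (j s))
        = ((fun x : ℝ × ℕ => (1 : Mat n) + elem x.1 x.2) ∘ fun s => (b s, j s)) := by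
      funext s
      show ((1 : Mat n) + (b s : ℂ) • Ecplx n (j s + 1) (j s))ᵀ = (1 : Mat n) + elem (b s) (j s)
      rw [Matrix.transpose_add, Matrix.transpose_smul, Matrix.transpose_one, transpose_Ecplx]
      rfl
    rw [hfun]
  have hL : (List.ofFn fun s => (1 : Mat n) + (b s : ℂ) • Ecplx n (j s + 1) (j s)).prod
      = 1 + Kᵀ := by
    rw [← Matrix.transpose_transpose ((List.ofFn fun s => (1 : Mat n) + (b s : ℂ) • Ecplx n (j s + 1) (j s)).prod), hLT, Matrix.transpose_add, Matrix.transpose_one]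
  rw [hU, hL]
  have hKTT : UpS J₂ (Kᵀ)ᵀ := by rwa [Matrix.transpose_transpose]
  have hAK : A * Kᵀ = 0 ∧ Kᵀ * A = 0 := cross_zero hdisj hAU hKTT
  have hM : ((1 : Mat n) + A) * (1 + Kᵀ) = 1 + A + Kᵀ := by
    have : ((1 : Mat n) + A) * (1 + Kᵀ) = 1 + A + Kᵀ + A * Kᵀ := by noncomm_ring
    rw [this, hAK.1, add_zero]
  rw [hM]
  apply normalize hJ₁ hJ₂ hdisj A Kᵀ hAU hKTT
  · intro p hp
    rw [hAsd p]
    have hpos : ∀ x ∈ L₁, 0 < x.1 := by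
      intro x hx
      rw [hL₁def, List.mem_ofFn] at hx
      obtain ⟨t, rfl⟩ := hx
      exact ha t
    have hne : ∃ x ∈ L₁, x.2 = p+1 := by
      obtain ⟨t, ht⟩ := hisurj (p+1) hp
      exact ⟨(a t, i t), by rw [hL₁def, List.mem_ofFn]; exact ⟨t, rfl⟩, ht⟩
    exact_mod_cast Complex.ofReal_ne_zero.mpr (sum_filter_pos L₁ hpos (p+1) hne)
  · intro p hp
    rw [ent_transpose, hKsd p]
    have hpos : ∀ x ∈ L₂, 0 < x.1 := by
      intro x hx
      rw [hL₂def, List.mem_reverse, List.mem_ofFn] at hx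
      obtain ⟨s, rfl⟩ := hx
      exact hb s
    have hne : ∃ x ∈ L₂, x.2 = p+1 := by
      obtain ⟨s, hs⟩ := hjsurj (p+1) hp
      exact ⟨(b s, j s), by rw [hL₂def, List.mem_reverse, List.mem_ofFn]; exact ⟨s, rfl⟩, hs⟩
    exact_mod_cast Complex.ofReal_ne_zero.mpr (sum_filter_pos L₂ hpos (p+1) hne)

end Stmt7

/-- For disjoint `J₁, J₂ ⊆ {1,…,n}`: given sequences `i`, `i'` with set of values exactly
`J₁`, sequences `j`, `j'` with set of values exactly `J₂`, and positive real coefficients,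
the matrices `[∏ₜ (I + aₜ E_{iₜ,iₜ+1})]·[∏ₛ (I + bₛ E_{jₛ+1,jₛ})]` and
`[∏ₜ (I + a'ₜ E_{i'ₜ,i'ₜ+1})]·[∏ₛ (I + b'ₛ E_{j'ₛ+1,j'ₛ})]` are similar. -/
theorem stmt7 (n : ℕ) (hn : 1 ≤ n) (J₁ J₂ : Finset ℕ)
    (hJ₁ : J₁ ⊆ Finset.Icc 1 n) (hJ₂ : J₂ ⊆ Finset.Icc 1 n) (hdisj : Disjoint J₁ J₂)
    (k k' l l' : ℕ) (i : Fin k → ℕ) (i' : Fin k' → ℕ) (j : Fin l → ℕ) (j' : Fin l' → ℕ)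
    (hi : ∀ t, i t ∈ J₁) (hisurj : ∀ m ∈ J₁, ∃ t, i t = m)
    (hi' : ∀ t, i' t ∈ J₁) (hi'surj : ∀ m ∈ J₁, ∃ t, i' t = m)
    (hj : ∀ s, j s ∈ J₂) (hjsurj : ∀ m ∈ J₂, ∃ s, j s = m)
    (hj' : ∀ s, j' s ∈ J₂) (hj'surj : ∀ m ∈ J₂, ∃ s, j' s = m)
    (a : Fin k → ℝ) (a' : Fin k' → ℝ) (b : Fin l → ℝ) (b' : Fin l' → ℝ)
    (ha : ∀ t, 0 < a t) (ha' : ∀ t, 0 < a' t) (hb : ∀ s, 0 < b s) (hb' : ∀ s, 0 < b' s) :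
    ∃ g : (Matrix (Fin (n + 1)) (Fin (n + 1)) ℂ)ˣ,
      (g : Matrix (Fin (n + 1)) (Fin (n + 1)) ℂ) *
          (((List.ofFn fun t => (1 : Matrix (Fin (n + 1)) (Fin (n + 1)) ℂ)
              + (a t : ℂ) • Ecplx n (i t) (i t + 1)).prod) *
            ((List.ofFn fun s => (1 : Matrix (Fin (n + 1)) (Fin (n + 1)) ℂ)
              + (b s : ℂ) • Ecplx n (j s + 1) (j s)).prod)) *
          ((g⁻¹ : (Matrix (Fin (n + 1)) (Fin (n + 1)) ℂ)ˣ) :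
            Matrix (Fin (n + 1)) (Fin (n + 1)) ℂ)
        = ((List.ofFn fun t => (1 : Matrix (Fin (n + 1)) (Fin (n + 1)) ℂ)
              + (a' t : ℂ) • Ecplx n (i' t) (i' t + 1)).prod) *
            ((List.ofFn fun s => (1 : Matrix (Fin (n + 1)) (Fin (n + 1)) ℂ)
              + (b' s : ℂ) • Ecplx n (j' s + 1) (j' s)).prod) := by
  have h1 := Stmt7.side J₁ J₂ hJ₁ hJ₂ hdisj k l i j hi hisurj hj hjsurj a b ha hb
  have h2 := Stmt7.side J₁ J₂ hJ₁ hJ₂ hdisj k' l' i' j' hi' hi'surj hj' hj'surj a' b' ha' hb'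
  exact h1.trans h2.symm
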